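/- The polynomial 5x⁸ + 3x⁶ − 32x⁴ + 52x² − 36 has exactly one positive real root. -/

import Mathlib

/-- The polynomial `5x⁸ + 3x⁶ − 32x⁴ + 52x² − 36` has exactly one positive
real root. -/
theorem stmt_18 :
    ∃! x : ℝ, 0 < x ∧
      5 * x ^ 8 + 3 * x ^ 6 - 32 * x ^ 4 + 52 * x ^ 2 - 36 = 0 := by
  set f : ℝ → ℝ := fun x => 5 * x ^ 8 + 3 * x ^ 6 - 32 * x ^ 4 + 52 * x ^ 2 - 36 with hf
  have hcont : Continuous f := by fun_prop
  have hmono : StrictMonoOn f (Set.Ici 0) := by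
    apply strictMonoOn_of_deriv_pos (convex_Ici 0) hcont.continuousOn
    intro x hx
    rw [interior_Ici] at hx
    have hx' : (0:ℝ) < x := hx
    have hD : HasDerivAt f (40 * x ^ 7 + 18 * x ^ 5 - 128 * x ^ 3 + 104 * x) x := by
      have h1 := ((hasDerivAt_pow 8 x).const_mul (5:ℝ))
      have h2 := ((hasDerivAt_pow 6 x).const_mul (3:ℝ))
      have h3 := ((hasDerivAt_pow 4 x).const_mul (32:ℝ))
      have h4 := ((hasDerivAt_pow 2 x).const_mul (52:ℝ))
      have h := (((h1.add h2).sub h3).add h4).sub_const (36:ℝ)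
      refine h.congr_deriv ?_
      push_cast
      ring
    rw [hD.deriv]
    nlinarith [mul_nonneg (mul_nonneg hx'.le (sq_nonneg x)) (sq_nonneg (x ^ 2 - 9/10)),
      mul_nonneg hx'.le (sq_nonneg (x ^ 2 - 401/450)), hx', sq_nonneg x]
  have h12 : (1:ℝ) ≤ 2 := by norm_num
  have hsub := intermediate_value_Icc h12 hcont.continuousOn
  have h0 : (0:ℝ) ∈ Set.Icc (f 1) (f 2) := by
    constructor <;> · simp only [hf]; norm_num
  obtain ⟨c, hc, hfc⟩ := hsub h0
  refine ⟨c, ⟨by linarith [hc.1], hfc⟩, ?_⟩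
  rintro y ⟨hy, hfy⟩
  exact hmono.injOn (Set.mem_Ici.mpr hy.le) (Set.mem_Ici.mpr (by linarith [hc.1]))
    (hfy.trans hfc.symm)
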